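/- For each i ∈ {1,…,n}, let η_i be the least element (in the dominance order) of the set P_i of weights μ ∈ P(λ) whose α_i-coefficient equals m_i. Then (η_i, α_j) ≤ 0 for all j ≠ i and (η_i, α_i) > 0; consequently, the coordinate faces F_1, …, F_n are pairwise distinct. -/

import Mathlib

open RealInnerProductSpace

noncomputable section

variable {E : Type*} [NormedAddCommGroup E] [InnerProductSpace ℝ E] [FiniteDimensional ℝ E]

/-- Reflection in the hyperplane orthogonal to `β`. -/
def sref (β : E) : E ≃ₗᵢ[ℝ] E := Submodule.reflection (ℝ ∙ β)ᗮ

/-- Data of a system of simple roots of a (crystallographic, irreducible) root system: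
the simple roots form a basis of the euclidean space, Cartan integers are integral,
distinct simple roots have nonpositive inner products, and the Dynkin diagram is connected. -/
structure RootData (n : ℕ) (E : Type*) [NormedAddCommGroup E] [InnerProductSpace ℝ E] where
  α : Fin n → E
  b : Module.Basis (Fin n) ℝ E
  hb : ∀ i, b i = α i
  cartan : ∀ i j, ∃ z : ℤ, (z : ℝ) * ⟪α j, α j⟫ = 2 * ⟪α i, α j⟫
  offdiag : ∀ i j : Fin n, i ≠ j → ⟪α i, α j⟫ ≤ 0
  conn : ∀ i j : Fin n, Relation.ReflTransGen (fun a b => a ≠ b ∧ ⟪α a, α b⟫ ≠ 0) i j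

namespace RootData

variable {n : ℕ} (S : RootData n E)

/-- The simple reflections. -/
def s (i : Fin n) : E ≃ₗᵢ[ℝ] E := sref (S.α i)

/-- The Weyl group, generated by the simple reflections. -/
def W : Subgroup (E ≃ₗᵢ[ℝ] E) := Subgroup.closure (Set.range S.s)

/-- The standard parabolic subgroup generated by the simple reflections indexed by `I`. -/
def WI (I : Set (Fin n)) : Subgroup (E ≃ₗᵢ[ℝ] E) := Subgroup.closure (S.s '' I)

/-- The set of roots:  the Weyl group orbit of the simple roots. -/
def roots : Set E := {β | ∃ w ∈ S.W, ∃ i, β = w (S.α i)}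

/-- `x` is dominant: nonnegative inner product with every simple root. -/
def Dominant (x : E) : Prop := ∀ i, 0 ≤ ⟪x, S.α i⟫

/-- The dominant weight `λ = Σ mᵢ αᵢ` (with nonnegative integer coefficients). -/
def lam (m : Fin n → ℕ) : E := ∑ j, (m j : ℝ) • S.α j

/-- `λ` is an integral weight: `2(λ,αᵢ)/(αᵢ,αᵢ)` is a (nonnegative) integer. -/
def IntegralDom (m : Fin n → ℕ) : Prop :=
  ∀ i, ∃ z : ℕ, (z : ℝ) * ⟪S.α i, S.α i⟫ = 2 * ⟪S.lam m, S.α i⟫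

/-- The Weyl group orbit of a point. -/
def orbit (x : E) : Set E := (fun w : E ≃ₗᵢ[ℝ] E => w x) '' (S.W : Set (E ≃ₗᵢ[ℝ] E))

/-- The weight polytope: the convex hull of the Weyl group orbit of `λ`. -/
def poly (m : Fin n → ℕ) : Set E := convexHull ℝ (S.orbit (S.lam m))

/-- `c μ i` is the coefficient of `αᵢ` when `μ` is expressed in the basis of simple roots. -/
def c (μ : E) (i : Fin n) : ℝ := S.b.repr μ i

/-- The set of weights `P(λ)`:  points of the weight polytope lying in the root lattice. -/
def Pw (m : Fin n → ℕ) : Set E := {μ ∈ S.poly m | ∀ i, ∃ z : ℤ, S.c μ i = z}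

/-- `P_I`: the weights whose `αᵢ`-coefficient equals `mᵢ` for all `i ∈ I`. -/
def P_ (m : Fin n → ℕ) (I : Set (Fin n)) : Set E :=
  {μ ∈ S.Pw m | ∀ i ∈ I, S.c μ i = m i}

/-- The standard parabolic face `F_I` of the weight polytope. -/
def F_ (m : Fin n → ℕ) (I : Set (Fin n)) : Set E :=
  {x ∈ S.poly m | ∀ i ∈ I, S.c x i = m i}

/-- The dominance order: `μ ≤ ν` iff `ν - μ` is a nonnegative integral sum of simple roots. -/
def wle (μ ν : E) : Prop := ∃ a : Fin n → ℕ, ν - μ = ∑ i, (a i : ℝ) • S.α i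

/-- Adjacency in the extended Dynkin diagram with extra node `-λ` (encoded as `none`). -/
def adj (m : Fin n → ℕ) : Option (Fin n) → Option (Fin n) → Prop
  | none, none => False
  | none, some j => 0 < ⟪S.lam m, S.α j⟫
  | some i, none => 0 < ⟪S.lam m, S.α i⟫
  | some i, some j => i ≠ j ∧ ⟪S.α i, S.α j⟫ ≠ 0

/-- One step in the extended Dynkin diagram, staying within the vertices `{-λ} ∪ {αₖ : k ∈ K}`. -/
def within (m : Fin n → ℕ) (K : Set (Fin n)) (a b : Option (Fin n)) : Prop :=
  S.adj m a b ∧ (∀ i, a = some i → i ∈ K) ∧ (∀ i, b = some i → i ∈ K)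

/-- `I̅⁰`: indices of the simple roots in the connected component of `-λ` in the subdiagram
of the extended Dynkin diagram on the complement of `I` together with `-λ`. -/
def comp0 (m : Fin n → ℕ) (I : Set (Fin n)) : Set (Fin n) :=
  {j | j ∉ I ∧ Relation.ReflTransGen (S.within m Iᶜ) none (some j)}

/-- The subdiagram of the extended Dynkin diagram on `{-λ} ∪ {αₖ : k ∈ K}` is connected. -/
def ConnWith (m : Fin n → ℕ) (K : Set (Fin n)) : Prop :=
  ∀ j ∈ K, Relation.ReflTransGen (S.within m K) none (some j)

/-- `ω` is the `i`-th fundamental coweight: `(ω, αⱼ) = δᵢⱼ`. -/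
def IsCoweight (i : Fin n) (ω : E) : Prop :=
  ∀ j, ⟪ω, S.α j⟫ = if j = i then 1 else 0

end RootData

variable {n : ℕ}

set_option linter.unusedSectionVars false

namespace RootData

variable {E : Type*} [NormedAddCommGroup E] [InnerProductSpace ℝ E] [FiniteDimensional ℝ E]
variable {n : ℕ} (S : RootData n E)

lemma alpha_ne_zero (k : Fin n) : S.α k ≠ 0 := S.hb k ▸ S.b.ne_zero k

lemma inner_self_pos' (k : Fin n) : 0 < ⟪S.α k, S.α k⟫ :=
  lt_of_le_of_ne real_inner_self_nonneg (Ne.symm (inner_self_ne_zero.mpr (S.alpha_ne_zero k)))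

lemma sref_apply {β : E} (hβ : β ≠ 0) (x : E) : sref β x = x - (2 * ⟪x, β⟫ / ⟪β, β⟫) • β := by
  have hn : ‖β‖ ≠ 0 := norm_ne_zero_iff.mpr hβ
  rw [sref, Submodule.reflection_orthogonal_apply, Submodule.reflection_apply, Submodule.starProjection_singleton]
  rw [real_inner_comm β x, real_inner_self_eq_norm_sq]
  simp only [RCLike.ofReal_real_eq_id, id_eq]
  match_scalars
  field_simp
  all_goals ring

lemma s_apply (k : Fin n) (x : E) :
    S.s k x = x - (2 * ⟪x, S.α k⟫ / ⟪S.α k, S.α k⟫) • S.α k :=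
  sref_apply (S.alpha_ne_zero k) x

lemma c_sub (x y : E) (k : Fin n) : S.c (x - y) k = S.c x k - S.c y k := by
  unfold c; rw [map_sub]; simp

lemma c_smul (r : ℝ) (x : E) (k : Fin n) : S.c (r • x) k = r * S.c x k := by
  unfold c; rw [map_smul]; simp

lemma c_alpha (k l : Fin n) : S.c (S.α k) l = if l = k then 1 else 0 := by
  unfold c; rw [← S.hb, S.b.repr_self]; simp [Finsupp.single_apply, eq_comm]

lemma c_sumsmul (f : Fin n → ℝ) (l : Fin n) : S.c (∑ k, f k • S.α k) l = f l := by
  unfold c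
  simp_rw [← S.hb]
  rw [map_sum]
  simp [Module.Basis.repr_self, Finsupp.single_apply]

lemma c_lam (m : Fin n → ℕ) (k : Fin n) : S.c (S.lam m) k = m k := S.c_sumsmul _ k

lemma c_s_apply (k : Fin n) (x : E) (l : Fin n) :
    S.c (S.s k x) l = S.c x l - (if l = k then 2 * ⟪x, S.α k⟫ / ⟪S.α k, S.α k⟫ else 0) := by
  rw [S.s_apply, S.c_sub, S.c_smul, S.c_alpha]
  by_cases h : l = k <;> simp [h]

lemma inner_eq_sum_c (x : E) (l : Fin n) : ⟪x, S.α l⟫ = ∑ k, S.c x k * ⟪S.α k, S.α l⟫ := by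
  conv_lhs => rw [← S.b.sum_repr x]
  rw [sum_inner]
  refine Finset.sum_congr rfl fun k _ => ?_
  rw [S.hb, real_inner_smul_left]; rfl

lemma lam_inner (m : Fin n → ℕ) (l : Fin n) :
    ⟪S.lam m, S.α l⟫ = ∑ k, (m k : ℝ) * ⟪S.α k, S.α l⟫ := by
  unfold lam; rw [sum_inner]; exact Finset.sum_congr rfl fun k _ => real_inner_smul_left _ _ _

lemma s_mem_W (k : Fin n) : S.s k ∈ S.W :=
  Subgroup.subset_closure (Set.mem_range_self k)

lemma poly_invariant (m : Fin n → ℕ) (k : Fin n) {x : E} (hx : x ∈ S.poly m) :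
    S.s k x ∈ S.poly m := by
  have himg : S.s k '' S.orbit (S.lam m) ⊆ S.orbit (S.lam m) := by
    rintro y ⟨z, ⟨w, hw, rfl⟩, rfl⟩
    exact ⟨S.s k * w, mul_mem (S.s_mem_W k) hw, rfl⟩
  have h1 : S.s k x ∈ (S.s k).toLinearEquiv.toLinearMap '' (convexHull ℝ (S.orbit (S.lam m))) :=
    Set.mem_image_of_mem _ hx
  rw [LinearMap.image_convexHull] at h1
  exact convexHull_mono himg h1

lemma lam_mem_poly (m : Fin n → ℕ) : S.lam m ∈ S.poly m :=
  subset_convexHull ℝ _ ⟨1, SetLike.mem_coe.mpr (one_mem S.W), rfl⟩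

lemma int_ratio {x : E} (hx : ∀ k, ∃ z : ℤ, S.c x k = z) (j : Fin n) :
    ∃ z : ℤ, (z : ℝ) * ⟪S.α j, S.α j⟫ = 2 * ⟪x, S.α j⟫ := by
  choose zc hzc using hx
  choose zk hzk using fun k => S.cartan k j
  refine ⟨∑ k, zc k * zk k, ?_⟩
  rw [S.inner_eq_sum_c x j, Finset.mul_sum]
  push_cast
  rw [Finset.sum_mul]
  refine Finset.sum_congr rfl fun k _ => ?_
  rw [hzc k]
  rw [mul_assoc, hzk k]
  ring

end RootData
/-- if `ηᵢ` is the least element of `P_i` in the dominance order, then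
`(ηᵢ, αⱼ) ≤ 0` for `j ≠ i` and `(ηᵢ, αᵢ) > 0`; consequently the coordinate faces are
pairwise distinct. -/
theorem coordinate_faces_distinct (S : RootData n E) (m : Fin n → ℕ)
    (hdom : S.Dominant (S.lam m)) (hint : S.IntegralDom m) (hlam : S.lam m ≠ 0)
    (i : Fin n) (η : E) (hη : η ∈ S.P_ m {i}) (hleast : ∀ μ ∈ S.P_ m {i}, S.wle η μ) :
    (∀ j, j ≠ i → ⟪η, S.α j⟫ ≤ 0) ∧ 0 < ⟪η, S.α i⟫ ∧
      (∀ j, j ≠ i → S.F_ m {i} ≠ S.F_ m {j}) := by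
  obtain ⟨⟨hpoly, hintc⟩, hci'⟩ := hη
  have hci : S.c η i = m i := hci' i rfl
  -- Part 1
  have key1 : ∀ j, j ≠ i → ⟪η, S.α j⟫ ≤ 0 := by
    intro j hj
    obtain ⟨z, hz⟩ := S.int_ratio hintc j
    have hαj := S.inner_self_pos' j
    have ht : 2 * ⟪η, S.α j⟫ / ⟪S.α j, S.α j⟫ = (z : ℝ) := by
      field_simp
      linarith [hz]
    have hsP : S.s j η ∈ S.P_ m {i} := by
      refine ⟨⟨S.poly_invariant m j hpoly, ?_⟩, ?_⟩
      · intro k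
        obtain ⟨zk, hzk⟩ := hintc k
        refine ⟨zk - (if k = j then z else 0), ?_⟩
        rw [S.c_s_apply, hzk, ht]
        by_cases h : k = j <;> simp [h]
      · intro k hk
        simp only [Set.mem_singleton_iff] at hk
        subst hk
        rw [S.c_s_apply, if_neg (Ne.symm hj), sub_zero]
        exact hci
    obtain ⟨a, ha⟩ := hleast _ hsP
    have h2 : -(2 * ⟪η, S.α j⟫ / ⟪S.α j, S.α j⟫) = (a j : ℝ) := by
      have := congrArg (fun x => S.c x j) ha
      simp only [S.c_sub] at this
      rw [S.c_s_apply, if_pos rfl] at this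
      rw [show (∑ k, ((a k : ℝ)) • S.α k) = ∑ k, ((fun k => (a k : ℝ)) k) • S.α k from rfl,
        S.c_sumsmul] at this
      linarith [this]
    by_contra hcon
    push_neg at hcon
    have hpos : 0 < 2 * ⟪η, S.α j⟫ / ⟪S.α j, S.α j⟫ := div_pos (by linarith) hαj
    have : (0:ℝ) ≤ a j := Nat.cast_nonneg _
    linarith
  -- Part 2
  have key2 : 0 < ⟪η, S.α i⟫ := by
    by_contra hcon
    push_neg at hcon
    have hall : ∀ k, ⟪η, S.α k⟫ ≤ 0 := by
      intro k
      by_cases h : k = i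
      · exact h ▸ hcon
      · exact key1 k h
    have hlamP : S.lam m ∈ S.P_ m {i} :=
      ⟨⟨S.lam_mem_poly m, fun k => ⟨m k, by rw [S.c_lam]; norm_num⟩⟩,
        fun k _ => S.c_lam m k⟩
    obtain ⟨a, ha⟩ := hleast _ hlamP
    have hrepr : ∀ l, S.c (S.lam m) l - S.c η l = (a l : ℝ) := by
      intro l
      have := congrArg (fun x => S.c x l) ha
      simp only [S.c_sub] at this
      rw [show (∑ k, ((a k : ℝ)) • S.α k) = ∑ k, ((fun k => (a k : ℝ)) k) • S.α k from rfl,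
        S.c_sumsmul] at this
      exact this
    have hai : a i = 0 := by
      have h0 := hrepr i
      rw [S.c_lam, hci, sub_self] at h0
      exact_mod_cast h0.symm
    have hinner : ∀ l, ⟪η, S.α l⟫ = ⟪S.lam m, S.α l⟫ - ∑ k, (a k : ℝ) * ⟪S.α k, S.α l⟫ := by
      intro l
      have hη' : η = S.lam m - ∑ k, (a k : ℝ) • S.α k := by
        rw [← ha]; abel
      rw [hη', inner_sub_left, sum_inner]
      congr 1
      exact Finset.sum_congr rfl fun k _ => real_inner_smul_left _ _ _
    have hSlem : ∀ l, a l = 0 →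
        (∀ k, (a k : ℝ) * ⟪S.α k, S.α l⟫ = 0) ∧ ⟪S.lam m, S.α l⟫ = 0 := by
      intro l hl
      have h1 : ⟪η, S.α l⟫ ≤ 0 := hall l
      have h2 : 0 ≤ ⟪S.lam m, S.α l⟫ := hdom l
      have hterm : ∀ k ∈ Finset.univ, (a k : ℝ) * ⟪S.α k, S.α l⟫ ≤ 0 := by
        intro k _
        by_cases h : k = l
        · subst h; rw [hl]; simp
        · exact mul_nonpos_of_nonneg_of_nonpos (Nat.cast_nonneg _) (S.offdiag k l h)
      have hle : ∑ k, (a k : ℝ) * ⟪S.α k, S.α l⟫ ≤ 0 := Finset.sum_nonpos hterm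
      have hsum0 : ∑ k, (a k : ℝ) * ⟪S.α k, S.α l⟫ = 0 := by
        have h3 := hinner l
        linarith
      refine ⟨fun k => (Finset.sum_eq_zero_iff_of_nonpos hterm).mp hsum0 k (Finset.mem_univ k), ?_⟩
      have h3 := hinner l
      linarith
    have hQ : ∀ l, a l = 0 := by
      intro l
      induction S.conn i l with
      | refl => exact hai
      | @tail b c _ hrel ih =>
          have h4 := (hSlem b ih).1 c
          have h5 : ⟪S.α c, S.α b⟫ ≠ 0 := by
            rw [real_inner_comm]; exact hrel.2
          have : (a c : ℝ) = 0 := by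
            rcases mul_eq_zero.mp h4 with h | h
            · exact h
            · exact absurd h h5
          exact_mod_cast this
    have hperp : ∀ l, ⟪S.lam m, S.α l⟫ = 0 := fun l => (hSlem l (hQ l)).2
    have hzero : ⟪S.lam m, S.lam m⟫ = 0 := by
      nth_rewrite 1 [show S.lam m = ∑ j, (m j : ℝ) • S.α j from rfl]
      rw [sum_inner]
      refine Finset.sum_eq_zero fun k _ => ?_
      rw [real_inner_smul_left, real_inner_comm, hperp k, mul_zero]
    exact hlam (inner_self_eq_zero.mp hzero)
  refine ⟨key1, key2, ?_⟩
  -- Part 3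
  intro j hj hF
  have hηF : η ∈ S.F_ m {i} := ⟨hpoly, fun k hk => by
    simp only [Set.mem_singleton_iff] at hk; subst hk; exact hci⟩
  have hηFj : η ∈ S.F_ m {j} := hF ▸ hηF
  have hcj : S.c η j = m j := hηFj.2 j rfl
  have htpos : 0 < 2 * ⟪η, S.α i⟫ / ⟪S.α i, S.α i⟫ :=
    div_pos (by linarith) (S.inner_self_pos' i)
  have hxFj : S.s i η ∈ S.F_ m {j} := by
    refine ⟨S.poly_invariant m i hpoly, fun k hk => ?_⟩
    simp only [Set.mem_singleton_iff] at hk; subst hk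
    rw [S.c_s_apply, if_neg hj, sub_zero]
    exact hcj
  rw [← hF] at hxFj
  have hxi : S.c (S.s i η) i = m i := hxFj.2 i rfl
  rw [S.c_s_apply, if_pos rfl, hci] at hxi
  linarith
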